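/- arXiv:2601.22907 — 6 statements merged into one kernel-verified Lean document; each statement's English description precedes it below -/
import Mathlib

section
/- If W is a vector space over a field F and S : W → W is a linear endomorphism whose range has dimension equal to dim W (as cardinals), then there exist linear endomorphisms P, Q : W → W with P ∘ S ∘ Q = id. -/
/-- If the range of a linear endomorphism `S` of `W` has dimension equal to `dim W`
(as cardinals), then there exist `P, Q` with `P ∘ S ∘ Q = id`. -/
theorem stmt_1 (F W : Type*) [Field F] [AddCommGroup W] [Module F W]
    (S : W →ₗ[F] W)
    (hS : Module.rank F (LinearMap.range S) = Module.rank F W) :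
    ∃ P Q : W →ₗ[F] W, P ∘ₗ S ∘ₗ Q = LinearMap.id := by
  -- equivalence between range S and W
  let e : (LinearMap.range S) ≃ₗ[F] W := LinearEquiv.ofRankEq _ _ hS
  -- right inverse of the corestriction of S
  obtain ⟨g, hg⟩ := (S.rangeRestrict).exists_rightInverse_of_surjective
    (LinearMap.range_rangeRestrict S)
  -- projection onto range S
  obtain ⟨p, hp⟩ := (LinearMap.range S).exists_isCompl
  let π := (LinearMap.range S).projectionOnto p hp
  refine ⟨e.toLinearMap ∘ₗ π, g ∘ₗ e.symm.toLinearMap, ?_⟩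
  ext w
  have h1 : S.rangeRestrict (g (e.symm w)) = e.symm w := by
    have := congrArg (fun f => f (e.symm w)) hg
    exact this
  have h2 : S (g (e.symm w)) = ((e.symm w : LinearMap.range S) : W) := by
    have := congrArg (Subtype.val) h1
    simpa [LinearMap.rangeRestrict] using this
  show e (π (S (g (e.symm w)))) = w
  rw [h2, Submodule.projectionOnto_apply_left hp]
  simp
end

section
/- Let A be an algebra over a field F and let c be a cardinal strictly larger than the dimension of A over F, with c infinite. Then the left action of A on W = A ⊗_F F^{(c)} (where F^{(c)} is the free F-vector space on a set of cardinality c) gives an injective F-algebra homomorphism φ : A → End_F(W), and for every nonzero a ∈ A the linear map φ(a) has rank equal to dim_F W. -/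
open TensorProduct

/-- Let `A` be an algebra over a field `F` and `c` an infinite cardinal strictly larger than
`dim_F A`.  The left action of `A` on `W = A ⊗_F F^{(c)}` gives an injective `F`-algebra
homomorphism `φ : A → End_F(W)`, and for every nonzero `a ∈ A` the linear map `φ a` has
rank equal to `dim_F W`. -/
theorem stmt_3 (F A : Type) [Field F] [Ring A] [Algebra F A]
    (c : Cardinal) (hc : Module.rank F A < c) (hinf : Cardinal.aleph0 ≤ c) :
    ∃ φ : A →ₐ[F] Module.End F (A ⊗[F] (c.out →₀ F)),
      Function.Injective φ ∧
      (∀ (a x : A) (v : c.out →₀ F), φ a (x ⊗ₜ[F] v) = (a * x) ⊗ₜ[F] v) ∧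
      ∀ a : A, a ≠ 0 →
        Module.rank F (LinearMap.range (φ a)) = Module.rank F (A ⊗[F] (c.out →₀ F)) := by
  classical
  have key : ∀ (a x : A) (v : (c.out →₀ F)), (Algebra.lsmul F F (A ⊗[F] (c.out →₀ F)) a) (x ⊗ₜ[F] v)
      = (a * x) ⊗ₜ[F] v := by
    intro a x v
    show a • (x ⊗ₜ[F] v) = _
    rw [TensorProduct.smul_tmul', smul_eq_mul]
  refine ⟨Algebra.lsmul F F (A ⊗[F] (c.out →₀ F)), ?_, ?_, ?_⟩
  · -- injectivity
    intro a b hab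
    have hne : Nonempty c.out := by
      rw [← Cardinal.mk_ne_zero_iff, Cardinal.mk_out]
      intro h
      rw [h] at hinf
      exact Cardinal.aleph0_ne_zero (le_antisymm (by simpa using hinf) (zero_le))
    obtain ⟨i⟩ := hne
    have h1 := LinearMap.congr_fun hab ((1 : A) ⊗ₜ[F] (Finsupp.single i (1 : F)))
    rw [key, key, mul_one, mul_one] at h1
    have h2 := congrArg (fun z => TensorProduct.finsuppScalarRight F F A c.out z i) h1
    beta_reduce at h2
    simpa only [TensorProduct.finsuppScalarRight_apply_tmul_apply,
      Finsupp.single_eq_same, one_smul] using h2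
  · exact key
  · intro a ha
    have hA : Nontrivial A := ⟨a, 0, ha⟩
    -- φ a = rTensor of left multiplication
    have hφ : (Algebra.lsmul F F (A ⊗[F] (c.out →₀ F)) a : A ⊗[F] (c.out →₀ F) →ₗ[F] A ⊗[F] (c.out →₀ F))
        = LinearMap.rTensor (c.out →₀ F) (LinearMap.mulLeft F a) := by
      apply TensorProduct.ext'
      intro x v
      show a • (x ⊗ₜ[F] v) = _
      rw [TensorProduct.smul_tmul', smul_eq_mul]
      rfl
    set L := LinearMap.mulLeft F a
    have hrange : LinearMap.range (LinearMap.rTensor (c.out →₀ F) L)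
        = LinearMap.range (LinearMap.rTensor (c.out →₀ F) (Submodule.subtype (LinearMap.range L))) :=
      LinearMap.rTensor_range (Q := (c.out →₀ F)) (g := L)
    have hinj : Function.Injective (LinearMap.rTensor (c.out →₀ F) (Submodule.subtype (LinearMap.range L))) :=
      Module.Flat.rTensor_preserves_injective_linearMap _ (Submodule.injective_subtype _)
    have hrkV : Module.rank F (c.out →₀ F) = c := by
      simp [rank_finsupp_self]
    -- rank of range L : between 1 and rank A
    have haL : a ∈ LinearMap.range L := ⟨1, by simp [L]⟩
    have hLnt : Nontrivial (LinearMap.range L) :=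
      Submodule.nontrivial_iff_ne_bot.mpr (fun h => ha (by
        have := haL; rw [h] at this; simpa using this))
    have hrk1 : Module.rank F (LinearMap.range L) ≠ 0 :=
      (rank_pos (R := F) (M := LinearMap.range L)).ne'
    have hrkle : Module.rank F (LinearMap.range L) ≤ Module.rank F A :=
      Submodule.rank_le _
    have hmul : ∀ r : Cardinal, r ≠ 0 → r < c → r * c = c := by
      intro r hr0 hrc
      exact Cardinal.mul_eq_right hinf hrc.le hr0
    calc Module.rank F (LinearMap.range ((Algebra.lsmul F F (A ⊗[F] (c.out →₀ F))) a))
        = Module.rank F (LinearMap.range (LinearMap.rTensor (c.out →₀ F)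
            (Submodule.subtype (LinearMap.range L)))) := by rw [hφ, hrange]
      _ = Module.rank F ((LinearMap.range L) ⊗[F] (c.out →₀ F)) :=
          rank_range_of_injective _ hinj
      _ = Module.rank F (LinearMap.range L) * Module.rank F (c.out →₀ F) := rank_tensorProduct'
      _ = c := by rw [hrkV]; exact hmul _ hrk1 (lt_of_le_of_lt hrkle hc)
      _ = Module.rank F A * Module.rank F (c.out →₀ F) := by
          rw [hrkV]
          exact (hmul _ (rank_pos (R := F) (M := A)).ne' hc).symm
      _ = Module.rank F (A ⊗[F] (c.out →₀ F)) := rank_tensorProduct'.symm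
end

section
/- Let R be an associative unital ring that embeds into an algebra A over a field F, and let r ∈ R be nonzero. Then there exists an associative unital ring L together with an injective ring homomorphism ι : R → L such that the two-sided ideal of L generated by ι(r) equals L. Moreover, if R is finitely generated as a ring, L can be chosen finitely generated. -/
open Finsupp in
lemma key_construction (R : Type) [Ring R] (F A : Type) [Field F] [Ring A] [Algebra F A]
    (e : R →+* A) (he : Function.Injective e) (r : R) (hr : r ≠ 0) :
    ∃ (M : Type) (_ : Ring M) (ι : R →+* M) (a b : M),
      Function.Injective ι ∧ a * ι r * b = 1 := by
  classical
  set J := Module.Basis.ofVectorSpaceIndex F A with hJ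
  set B := Module.Basis.ofVectorSpace F A with hB
  set W := (List J →₀ A) with hW
  -- the embedding of A into End W, acting coordinatewise by left multiplication
  have happ : ∀ (g : A →ₗ[F] A) (f : W) (l : List J),
      Finsupp.mapRange.linearMap g f l = g (f l) := fun _ _ _ => rfl
  let ι₀ : A →+* Module.End F W :=
    { toFun := fun a => Finsupp.mapRange.linearMap (LinearMap.mulLeft F a)
      map_one' := by
        refine LinearMap.ext fun f => Finsupp.ext fun l => ?_
        simp [happ]
      map_mul' := fun x y => by
        refine LinearMap.ext fun f => Finsupp.ext fun l => ?_
        simp [happ, Module.End.mul_apply, mul_assoc]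
      map_zero' := by
        refine LinearMap.ext fun f => Finsupp.ext fun l => ?_
        simp [happ]
      map_add' := fun x y => by
        refine LinearMap.ext fun f => Finsupp.ext fun l => ?_
        simp [happ, add_mul] }
  have hι₀app : ∀ (x : A) (f : W) (l : List J), ι₀ x f l = x * f l := fun _ _ _ => rfl
  have hι₀ : Function.Injective ι₀ := by
    intro x y h
    have h2 := congrArg (fun (g : Module.End F W) => g (Finsupp.single [] 1) []) h
    simp only [hι₀app] at h2
    rw [Finsupp.single_eq_same] at h2
    simpa using h2
  have her : e r ≠ 0 := fun h => hr (he (by simpa using h))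
  -- the "spreading" map
  let slurp : List J → (A →ₗ[F] W) := fun l =>
    (Finsupp.mapRange.linearMap (Algebra.linearMap F A)) ∘ₗ
      (Finsupp.lmapDomain F F (fun j : J => j :: l)) ∘ₗ (B.repr : A →ₗ[F] (J →₀ F))
  have slurp_apply : ∀ (l : List J) (c : A) (i : List J),
      slurp l c i = algebraMap F A (Finsupp.mapDomain (fun j : J => j :: l) (B.repr c) i) :=
    fun _ _ _ => rfl
  have slurp_apply_eq : ∀ (l : List J) (c : A) (j : J),
      slurp l c (j :: l) = algebraMap F A (B.repr c j) := by
    intro l c j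
    have hinj : Function.Injective (fun j : J => j :: l) := by
      intro a b h; simpa using h
    rw [slurp_apply, Finsupp.mapDomain_apply hinj]
  have slurp_apply_ne : ∀ (l l' : List J) (c : A) (j : J), l' ≠ l →
      slurp l' c (j :: l) = 0 := by
    intro l l' c j hne
    have hnr : (j :: l) ∉ Set.range (fun j : J => j :: l') := by
      rintro ⟨j', hj'⟩
      simp only [List.cons.injEq] at hj'
      exact hne hj'.2
    rw [slurp_apply, Finsupp.mapDomain_notin_range _ _ hnr, map_zero]
  let b : W →ₗ[F] W := Finsupp.lsum F slurp
  -- T := left multiplication by e r, coordinatewise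
  set T : Module.End F W := ι₀ (e r) with hT
  have hTb : ∀ (f : W) (l : List J) (j : J),
      (T ∘ₗ b) f (j :: l) = B.repr (f l) j • e r := by
    intro f l j
    have h1 : (T ∘ₗ b) f (j :: l) = e r * (b f (j :: l)) := by
      rw [LinearMap.comp_apply, hT, hι₀app]
    have h2 : b f (j :: l) = algebraMap F A (B.repr (f l) j) := by
      rw [show b f = f.sum fun l' c => slurp l' c from rfl]
      rw [Finsupp.sum_apply]
      rw [Finsupp.sum_eq_single l (fun l' _ hne => slurp_apply_ne l l' _ j hne)
        (by simp)]
      exact slurp_apply_eq l (f l) j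
    rw [h1, h2, Algebra.smul_def, ← Algebra.commutes]
  have hker : LinearMap.ker (T ∘ₗ b) = ⊥ := by
    rw [LinearMap.ker_eq_bot']
    intro f hf
    ext l
    have h0 : f l = 0 := by
      have hrep : B.repr (f l) = 0 := by
        ext j
        have h3 := hTb f l j
        rw [hf] at h3
        simp only [Finsupp.zero_apply] at h3 ⊢
        rcases smul_eq_zero.mp h3.symm with h | h
        · exact h
        · exact absurd h her
      simpa using congrArg B.repr.symm hrep
    simp [h0]
  obtain ⟨a, ha⟩ := (T ∘ₗ b).exists_leftInverse_of_injective hker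
  refine ⟨Module.End F W, inferInstance, ι₀.comp e, a, b, hι₀.comp he, ?_⟩
  show a * T * b = 1
  rw [mul_assoc]
  show a ∘ₗ (T ∘ₗ b) = 1
  exact ha

lemma span_singleton_eq_top_of_sandwich {M : Type} [Ring M] {x a b : M}
    (h : a * x * b = 1) : TwoSidedIdeal.span {x} = ⊤ := by
  refine TwoSidedIdeal.eq_top _ ?_
  rw [← h]
  exact TwoSidedIdeal.mul_mem_right _ _ _
    (TwoSidedIdeal.mul_mem_left _ _ _ (TwoSidedIdeal.subset_span rfl))

lemma fg_construction (R : Type) [Ring R] (M : Type) [Ring M] (ιM : R →+* M) (a b : M)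
    (hι : Function.Injective ιM) (r : R) (hab : a * ιM r * b = 1)
    (hfg : ∃ s : Finset R, Subring.closure (s : Set R) = ⊤) :
      ∃ (L : Type) (_ : Ring L) (ι : R →+* L),
        Function.Injective ι ∧ TwoSidedIdeal.span {ι r} = ⊤ ∧
        ∃ t : Finset L, Subring.closure (t : Set L) = ⊤ := by
  classical
  obtain ⟨s, hs⟩ := hfg
  set S : Set M := (↑(s.image ιM) : Set M) ∪ {a, b} with hS
  set L : Subring M := Subring.closure S with hL
  have hmemS : ∀ x ∈ S, x ∈ L := fun x hx => Subring.subset_closure hx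
  have hmem : ∀ x : R, ιM x ∈ L := by
    intro x
    have hx : x ∈ Subring.closure (s : Set R) := hs ▸ Subring.mem_top x
    have h1 : ιM x ∈ (Subring.closure (s : Set R)).map ιM := ⟨x, hx, rfl⟩
    rw [ιM.map_closure] at h1
    refine Subring.closure_mono ?_ h1
    intro y hy
    rcases hy with ⟨z, hz, rfl⟩
    exact Or.inl (by simpa using Finset.mem_image_of_mem ιM hz)
  have haL : a ∈ L := hmemS a (Or.inr (Or.inl rfl))
  have hbL : b ∈ L := hmemS b (Or.inr (Or.inr rfl))
  let ι' : R →+* L := ιM.codRestrict L hmem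
  refine ⟨L, inferInstance, ι', ?_, ?_, ?_⟩
  · intro x y h
    exact hι (congrArg Subtype.val h)
  · refine span_singleton_eq_top_of_sandwich (a := ⟨a, haL⟩) (b := ⟨b, hbL⟩) ?_
    exact Subtype.ext (by simpa [ι'] using hab)
  · -- finite generation
    have hSfin : S.Finite := ((s.image ιM).finite_toSet).union ((Set.finite_singleton b).insert a)
    have hTfin : ((Subtype.val : L → M) ⁻¹' S).Finite :=
      Set.Finite.preimage (Subtype.val_injective.injOn) hSfin
    refine ⟨hTfin.toFinset, ?_⟩
    rw [Set.Finite.coe_toFinset]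
    rw [Subring.eq_top_iff']
    rintro ⟨x, hx⟩
    rw [hL] at hx
    induction hx using Subring.closure_induction with
    | mem y hy => exact Subring.subset_closure (by simpa using hy)
    | zero => exact zero_mem _
    | one => exact one_mem _
    | add y z hy hz hy' hz' => exact add_mem (hy' hy) (hz' hz)
    | neg y hy hy' => exact neg_mem (hy' hy)
    | mul y z hy hz hy' hz' => exact mul_mem (hy' hy) (hz' hz)

/-- Let `R` be a ring embedding into an algebra `A` over a field `F` and `r ∈ R` nonzero.
Then there is a ring `L` and an injective ring homomorphism `ι : R → L` such that the
two-sided ideal of `L` generated by `ι r` is all of `L`.  Moreover, if `R` is finitely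
generated as a ring, `L` can be chosen finitely generated. -/
theorem stmt_4 (R : Type) [Ring R] (F A : Type) [Field F] [Ring A] [Algebra F A]
    (e : R →+* A) (he : Function.Injective e) (r : R) (hr : r ≠ 0) :
    (∃ (L : Type) (_ : Ring L) (ι : R →+* L),
        Function.Injective ι ∧ TwoSidedIdeal.span {ι r} = ⊤) ∧
    ((∃ s : Finset R, Subring.closure (s : Set R) = ⊤) →
      ∃ (L : Type) (_ : Ring L) (ι : R →+* L),
        Function.Injective ι ∧ TwoSidedIdeal.span {ι r} = ⊤ ∧
        ∃ t : Finset L, Subring.closure (t : Set L) = ⊤) := by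
  obtain ⟨M, _, ι, a, b, hι, hab⟩ := key_construction R F A e he r hr
  constructor
  · exact ⟨M, inferInstance, ι, hι, span_singleton_eq_top_of_sandwich hab⟩
  · intro hfg
    exact fg_construction R M ι a b hι r hab hfg
end

section
/- Let R be an associative unital ring and g a unit of R. Then the normal closure in GL₃(R) of the diagonal matrix diag(g,1,1) contains the elementary matrix E₁₂(1−g). -/
set_option maxHeartbeats 1000000

open Matrix

/-- Let `R` be an associative unital ring and `g` a unit of `R`.  The normal closure in
`GL₃(R)` of `diag(g,1,1)` contains the elementary matrix `E₁₂(1−g)`. -/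
theorem stmt_8 (R : Type) [Ring R] (g : Rˣ)
    (D E : (Matrix (Fin 3) (Fin 3) R)ˣ)
    (hD : D.val = Matrix.diagonal ![(g : R), 1, 1])
    (hE : E.val =
      (1 : Matrix (Fin 3) (Fin 3) R) + Matrix.single 0 1 (1 - (g : R))) :
    E ∈ Subgroup.normalClosure {D} := by
  set C : (Matrix (Fin 3) (Fin 3) R)ˣ :=
    ⟨(1 : Matrix (Fin 3) (Fin 3) R) + Matrix.single 0 1 (1 : R),
     (1 : Matrix (Fin 3) (Fin 3) R) + Matrix.single 0 1 (-1 : R),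
     by ext i j; fin_cases i <;> fin_cases j <;>
        simp [Matrix.mul_apply, Fin.sum_univ_three, Matrix.single, Matrix.one_apply],
     by ext i j; fin_cases i <;> fin_cases j <;>
        simp [Matrix.mul_apply, Fin.sum_univ_three, Matrix.single, Matrix.one_apply]⟩
    with hC
  have key : E * D = C * D * C⁻¹ := by
    apply Units.ext
    have hCv : C.val =
        (1 : Matrix (Fin 3) (Fin 3) R) + Matrix.single 0 1 (1 : R) := by rw [hC]
    have hCiv : (C⁻¹).val =
        (1 : Matrix (Fin 3) (Fin 3) R) + Matrix.single 0 1 (-1 : R) := by rw [hC]; rfl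
    show E.val * D.val = C.val * D.val * (C⁻¹ : (Matrix (Fin 3) (Fin 3) R)ˣ).val
    rw [hE, hD, hCv, hCiv]
    ext i j
    fin_cases i <;> fin_cases j <;>
      simp [Matrix.mul_apply, Fin.sum_univ_three, Matrix.single, Matrix.one_apply,
        Matrix.diagonal] <;> abel
  have hE' : E = C * D * C⁻¹ * D⁻¹ := by
    rw [← key]; group
  have hDN : D ∈ Subgroup.normalClosure {D} :=
    Subgroup.subset_normalClosure rfl
  have hN : (Subgroup.normalClosure {D}).Normal := Subgroup.normalClosure_normal
  have hconj : C * D * C⁻¹ ∈ Subgroup.normalClosure {D} := by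
    have := hN.conj_mem D hDN C
    simpa [mul_assoc] using this
  rw [hE']
  exact mul_mem hconj (inv_mem hDN)
end

section
/- Let R be an associative unital ring and x ∈ R an element such that the two-sided ideal generated by x is all of R. Then the normal closure in GL₃(R) (or in the elementary subgroup E₃(R)) of the elementary matrix E₁₂(x) contains all elementary matrices E_{ij}(a) for i ≠ j and a ∈ R; in particular the normal closure contains E₃(R). -/
set_option maxHeartbeats 1000000

open Matrix

section Aux

variable {R : Type} [Ring R]

lemma std_mul_same (i j k : Fin 3) (a b : R) :
    single i j a * single j k b = single i k (a * b) :=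
  Matrix.single_mul_single_same (c := a) i j k b

lemma std_mul_ne {j k : Fin 3} (i l : Fin 3) (h : j ≠ k) (a b : R) :
    single i j a * single k l b = 0 :=
  Matrix.single_mul_single_of_ne (c := a) i _ _ h b

lemma std_neg (i j : Fin 3) (a : R) :
    single i j (-a) = -single i j a := by
  ext a' b'
  simp only [Matrix.single, Matrix.neg_apply, Matrix.of_apply]
  split <;> simp

/-- Elementary matrix as a unit. -/
def Eu (i j : Fin 3) (hij : i ≠ j) (a : R) : (Matrix (Fin 3) (Fin 3) R)ˣ where
  val := 1 + single i j a
  inv := 1 - single i j a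
  val_inv := by
    have h : single i j a * single i j a = 0 :=
      std_mul_ne i j (Ne.symm hij) a a
    have : (1 + single i j a) * (1 - single i j a) =
        1 - single i j a * single i j a := by noncomm_ring
    rw [this, h, sub_zero]
  inv_val := by
    have h : single i j a * single i j a = 0 :=
      std_mul_ne i j (Ne.symm hij) a a
    have : (1 - single i j a) * (1 + single i j a) =
        1 - single i j a * single i j a := by noncomm_ring
    rw [this, h, sub_zero]

lemma Eu_val (i j : Fin 3) (hij : i ≠ j) (a : R) :
    (Eu i j hij a).val = 1 + single i j a := rfl

lemma Eu_inv_val (i j : Fin 3) (hij : i ≠ j) (a : R) :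
    ((Eu i j hij a)⁻¹).val = 1 - single i j a := rfl

lemma Eu_mul (i j : Fin 3) (hij : i ≠ j) (a b : R) :
    Eu i j hij a * Eu i j hij b = Eu i j hij (a + b) := by
  refine Units.ext ?_
  show (1 + single i j a) * (1 + single i j b) = 1 + single i j (a + b)
  have h0 : single i j a * single i j b = 0 :=
    std_mul_ne i j (Ne.symm hij) a b
  rw [add_mul, mul_add, mul_add, h0, one_mul, one_mul, mul_one, single_add]
  abel

lemma Eu_inv (i j : Fin 3) (hij : i ≠ j) (a : R) :
    (Eu i j hij a)⁻¹ = Eu i j hij (-a) := by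
  refine Units.ext ?_
  show (1 : Matrix (Fin 3) (Fin 3) R) - single i j a = 1 + single i j (-a)
  rw [std_neg, sub_eq_add_neg]

lemma Eu_zero (i j : Fin 3) (hij : i ≠ j) :
    Eu i j hij (0 : R) = 1 := by
  refine Units.ext ?_
  show (1 : Matrix (Fin 3) (Fin 3) R) + single i j (0 : R) = 1
  rw [single_zero, add_zero]

/-- The key commutator identity. -/
lemma Eu_comm (i j k : Fin 3) (hij : i ≠ j) (hjk : j ≠ k) (hik : i ≠ k) (a b : R) :
    Eu i j hij a * Eu j k hjk b * (Eu i j hij a)⁻¹ * (Eu j k hjk b)⁻¹ =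
      Eu i k hik (a * b) := by
  refine Units.ext ?_
  show (1 + single i j a) * (1 + single j k b) *
      (1 - single i j a) * (1 - single j k b) =
      1 + single i k (a * b)
  set A := single i j a with hA
  set B := single j k b with hB
  have hAB : A * B = single i k (a * b) := std_mul_same i j k a b
  have hBA : B * A = 0 := std_mul_ne j j (Ne.symm hik) b a
  have hAA : A * A = 0 := std_mul_ne i j (Ne.symm hij) a a
  have hBB : B * B = 0 := std_mul_ne j k (Ne.symm hjk) b b
  have hABA : A * B * A = 0 := by
    rw [hAB]; exact std_mul_ne i j (Ne.symm hik) (a * b) a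
  have hABB : A * B * B = 0 := by
    rw [hAB]; exact std_mul_ne i k (Ne.symm hjk) (a * b) b
  have step1 : (1 + A) * (1 + B) = 1 + A + B + A * B := by noncomm_ring
  have step2 : (1 + A + B + A * B) * (1 - A) = 1 + B + A * B := by
    have : (1 + A + B + A * B) * (1 - A) =
        1 + A + B + A * B - A - A * A - B * A - A * B * A := by noncomm_ring
    rw [this, hAA, hBA, hABA]; abel
  have step3 : (1 + B + A * B) * (1 - B) = 1 + A * B := by
    have : (1 + B + A * B) * (1 - B) =
        1 + B + A * B - B - B * B - A * B * B := by noncomm_ring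
    rw [this, hBB, hABB]; abel
  rw [step1, step2, step3, hAB]

/-- The first conjugation identity: `E20(b) E01(x) E20(b)⁻¹ = E01(x) * E21(b*x)`. -/
lemma Eu_conj (b x : R) :
    Eu 2 0 (by decide) b * Eu 0 1 (by decide) x * (Eu 2 0 (by decide) b)⁻¹ =
      Eu 0 1 (by decide) x * Eu 2 1 (by decide) (b * x) := by
  refine Units.ext ?_
  show (1 + single 2 0 b) * (1 + single 0 1 x) * (1 - single 2 0 b) =
    (1 + single 0 1 x) * (1 + single 2 1 (b * x))
  set A := single (2 : Fin 3) (0 : Fin 3) b with hA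
  set B := single (0 : Fin 3) (1 : Fin 3) x with hB
  have hAB : A * B = single 2 1 (b * x) := std_mul_same 2 0 1 b x
  have hBA : B * A = 0 := std_mul_ne 0 0 (by decide) x b
  have hAA : A * A = 0 := std_mul_ne 2 0 (by decide) b b
  have hABA : A * B * A = 0 := by
    rw [hAB]; exact std_mul_ne 2 0 (by decide) (b * x) b
  have hBAB : B * (A * B) = 0 := by
    rw [hAB]; exact std_mul_ne 0 1 (by decide) x (b * x)
  have lhs : (1 + A) * (1 + B) * (1 - A) = 1 + B + A * B := by
    have : (1 + A) * (1 + B) * (1 - A) =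
        1 + A + B + A * B - A - A * A - B * A - A * B * A := by noncomm_ring
    rw [this, hAA, hBA, hABA]; abel
  have rhs : (1 + B) * (1 + A * B) = 1 + B + A * B := by
    have : (1 + B) * (1 + A * B) = 1 + B + A * B + B * (A * B) := by noncomm_ring
    rw [this, hBAB]; abel
  rw [lhs, ← hAB, rhs]

end Aux

/-- Let `R` be an associative unital ring and `x ∈ R` generate `R` as a two-sided ideal.
Then the normal closure in `GL₃(R)` of `E₁₂(x)` contains all elementary matrices
`E_{ij}(a)` for `i ≠ j`, `a ∈ R`. -/
theorem stmt_9 (R : Type) [Ring R] (x : R)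
    (hx : TwoSidedIdeal.span {x} = ⊤)
    (Ex : (Matrix (Fin 3) (Fin 3) R)ˣ)
    (hEx : Ex.val =
      (1 : Matrix (Fin 3) (Fin 3) R) + Matrix.single 0 1 x) :
    ∀ (i j : Fin 3), i ≠ j → ∀ (a : R) (M : (Matrix (Fin 3) (Fin 3) R)ˣ),
      M.val =
        (1 : Matrix (Fin 3) (Fin 3) R) + Matrix.single i j a →
      M ∈ Subgroup.normalClosure {Ex} := by
  set N := Subgroup.normalClosure {Ex} with hN
  have hNormal : N.Normal := Subgroup.normalClosure_normal
  have hExEu : Ex = Eu 0 1 (by decide) x := Units.ext hEx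
  have hExN : Eu 0 1 (by decide) x ∈ N := hExEu ▸ Subgroup.subset_normalClosure rfl
  -- commutator lemmas
  have comm_left : ∀ (n g : (Matrix (Fin 3) (Fin 3) R)ˣ), n ∈ N →
      n * g * n⁻¹ * g⁻¹ ∈ N := by
    intro n g hn
    have : n * g * n⁻¹ * g⁻¹ = n * (g * n⁻¹ * g⁻¹) := by group
    rw [this]
    exact N.mul_mem hn (hNormal.conj_mem _ (N.inv_mem hn) g)
  have comm_right : ∀ (n g : (Matrix (Fin 3) (Fin 3) R)ˣ), n ∈ N →
      g * n * g⁻¹ * n⁻¹ ∈ N := by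
    intro n g hn
    exact N.mul_mem (hNormal.conj_mem _ hn g) (N.inv_mem hn)
  -- Step 1: E21(b*x) ∈ N
  have h21x : ∀ b : R, Eu 2 1 (by decide) (b * x) ∈ N := by
    intro b
    have key : Eu 2 1 (by decide) (b * x) =
        (Eu 0 1 (by decide) x)⁻¹ *
          (Eu 2 0 (by decide) b * Eu 0 1 (by decide) x * (Eu 2 0 (by decide) b)⁻¹) := by
      rw [Eu_conj b x]; group
    rw [key]
    exact N.mul_mem (N.inv_mem hExN) (hNormal.conj_mem _ hExN _)
  -- Step 2: E20(b*x*c) ∈ N : [E21(b*x), E10(c)]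
  have h20 : ∀ b c : R, Eu 2 0 (by decide) (b * x * c) ∈ N := by
    intro b c
    have := comm_left (Eu 2 1 (by decide) (b * x)) (Eu 1 0 (by decide) c) (h21x b)
    rwa [Eu_comm 2 1 0 (by decide) (by decide) (by decide) (b * x) c] at this
  -- S := {r | E20(r) ∈ N} is a two-sided ideal
  set S : Set R := {r | Eu 2 0 (by decide) r ∈ N} with hS
  have hSzero : (0 : R) ∈ S := by
    simp only [hS, Set.mem_setOf_eq, Eu_zero]
    exact N.one_mem
  have hSadd : ∀ {r s : R}, r ∈ S → s ∈ S → r + s ∈ S := by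
    intro r s hr hs
    have : Eu 2 0 (by decide) (r + s) = Eu 2 0 (by decide) r * Eu 2 0 (by decide) s :=
      (Eu_mul 2 0 (by decide) r s).symm
    simp only [hS, Set.mem_setOf_eq, this]
    exact N.mul_mem hr hs
  have hSneg : ∀ {r : R}, r ∈ S → -r ∈ S := by
    intro r hr
    have : Eu 2 0 (by decide) (-r) = (Eu 2 0 (by decide) r)⁻¹ := (Eu_inv 2 0 (by decide) r).symm
    simp only [hS, Set.mem_setOf_eq, this]
    exact N.inv_mem hr
  have hSmul_left : ∀ {c r : R}, r ∈ S → c * r ∈ S := by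
    intro c r hr
    have h10 : Eu 1 0 (by decide) (c * r) ∈ N := by
      have := comm_right (Eu 2 0 (by decide) r) (Eu 1 2 (by decide) c) hr
      rwa [Eu_comm 1 2 0 (by decide) (by decide) (by decide) c r] at this
    have := comm_right (Eu 1 0 (by decide) (c * r)) (Eu 2 1 (by decide) 1) h10
    rw [Eu_comm 2 1 0 (by decide) (by decide) (by decide) 1 (c * r), one_mul] at this
    exact this
  have hSmul_right : ∀ {r c : R}, r ∈ S → r * c ∈ S := by
    intro r c hr
    have h21 : Eu 2 1 (by decide) (r * c) ∈ N := by
      have := comm_left (Eu 2 0 (by decide) r) (Eu 0 1 (by decide) c) hr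
      rwa [Eu_comm 2 0 1 (by decide) (by decide) (by decide) r c] at this
    have := comm_left (Eu 2 1 (by decide) (r * c)) (Eu 1 0 (by decide) 1) h21
    rw [Eu_comm 2 1 0 (by decide) (by decide) (by decide) (r * c) 1, mul_one] at this
    exact this
  set I : TwoSidedIdeal R := TwoSidedIdeal.mk' S hSzero hSadd hSneg hSmul_left hSmul_right
    with hI
  have hxI : x ∈ S := by
    have := h20 1 1
    rwa [one_mul, mul_one] at this
  -- every element of R is in S
  have hall : ∀ a : R, a ∈ S := by
    intro a
    have ha : a ∈ TwoSidedIdeal.span {x} := by rw [hx]; trivial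
    have := TwoSidedIdeal.mem_span_iff.mp ha I (by
      intro y hy
      rw [Set.mem_singleton_iff] at hy
      subst hy
      rw [hI, SetLike.mem_coe, TwoSidedIdeal.mem_mk']
      exact hxI)
    rwa [hI, TwoSidedIdeal.mem_mk'] at this
  -- now derive all elementary matrices
  have h20N : ∀ a : R, Eu 2 0 (by decide) a ∈ N := hall
  have h10N : ∀ a : R, Eu 1 0 (by decide) a ∈ N := by
    intro a
    have := comm_right (Eu 2 0 (by decide) 1) (Eu 1 2 (by decide) a) (h20N 1)
    rwa [Eu_comm 1 2 0 (by decide) (by decide) (by decide) a 1, mul_one] at this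
  have h21N : ∀ a : R, Eu 2 1 (by decide) a ∈ N := by
    intro a
    have := comm_left (Eu 2 0 (by decide) a) (Eu 0 1 (by decide) 1) (h20N a)
    rwa [Eu_comm 2 0 1 (by decide) (by decide) (by decide) a 1, mul_one] at this
  have h01N : ∀ a : R, Eu 0 1 (by decide) a ∈ N := by
    intro a
    have := comm_right (Eu 2 1 (by decide) 1) (Eu 0 2 (by decide) a) (h21N 1)
    rwa [Eu_comm 0 2 1 (by decide) (by decide) (by decide) a 1, mul_one] at this
  have h12N : ∀ a : R, Eu 1 2 (by decide) a ∈ N := by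
    intro a
    have := comm_left (Eu 1 0 (by decide) a) (Eu 0 2 (by decide) 1) (h10N a)
    rwa [Eu_comm 1 0 2 (by decide) (by decide) (by decide) a 1, mul_one] at this
  have h02N : ∀ a : R, Eu 0 2 (by decide) a ∈ N := by
    intro a
    have := comm_left (Eu 0 1 (by decide) a) (Eu 1 2 (by decide) 1) (h01N a)
    rwa [Eu_comm 0 1 2 (by decide) (by decide) (by decide) a 1, mul_one] at this
  intro i j hij a M hM
  have hMEu : M = Eu i j hij a := Units.ext hM
  rw [hMEu]
  fin_cases i <;> fin_cases j <;>
    first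
      | exact (hij rfl).elim
      | exact h01N a
      | exact h02N a
      | exact h10N a
      | exact h12N a
      | exact h20N a
      | exact h21N a
end

section
/- Let L be an associative unital ring and suppose 1 = Σᵢ aᵢ r bᵢ is a finite sum with aᵢ, bᵢ ∈ L and r ∈ L. Then for every x ∈ L, the elementary matrix E₁₂(x) in E₃(L) is a product of conjugates (by elements of E₃(L)) of the matrices E₁₂(r), E₁₃(r), E₂₃(r) and their inverses. -/
set_option maxHeartbeats 1000000

open Matrix

/-- The elementary subgroup `E₃(L)` of `GL₃(L)`, generated by the elementary matrices
`E_{ij}(a) = I + a·e_{ij}`, `i ≠ j`. -/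
def E3 (L : Type) [Ring L] : Subgroup (Matrix (Fin 3) (Fin 3) L)ˣ :=
  Subgroup.closure {U : (Matrix (Fin 3) (Fin 3) L)ˣ |
    ∃ (i j : Fin 3) (a : L), i ≠ j ∧
      U.val = 1 + Matrix.single i j a}

lemma stdBM_neg {L : Type} [Ring L] (i j : Fin 3) (a : L) :
    Matrix.single i j (-a) = -Matrix.single i j a := by
  apply eq_neg_of_add_eq_zero_left
  rw [← Matrix.single_add]
  simp

section Aux

variable {L : Type} [Ring L]

/-- Elementary matrix as a unit. -/
def elu (i j : Fin 3) (hij : i ≠ j) (a : L) : (Matrix (Fin 3) (Fin 3) L)ˣ where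
  val := 1 + Matrix.single i j a
  inv := 1 + Matrix.single i j (-a)
  val_inv := by
    rw [add_mul, mul_add, mul_add, Matrix.single_mul_single_of_ne (c := a) i j i hij.symm (-a)]
    simp [stdBM_neg]
  inv_val := by
    rw [add_mul, mul_add, mul_add, Matrix.single_mul_single_of_ne (c := -a) i j i hij.symm a]
    simp [stdBM_neg]

lemma elu_inv (i j : Fin 3) (hij : i ≠ j) (a : L) :
    (elu i j hij a)⁻¹ = elu i j hij (-a) := by
  ext
  rfl

lemma elu_mul (i j : Fin 3) (hij : i ≠ j) (a b : L) :
    elu i j hij a * elu i j hij b = elu i j hij (a + b) := by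
  rw [Units.ext_iff, Units.val_mul]
  show (1 + Matrix.single i j a) * (1 + Matrix.single i j b) =
    1 + Matrix.single i j (a + b)
  rw [add_mul, mul_add, mul_add, Matrix.single_mul_single_of_ne (c := a) i j i hij.symm b]
  simp [Matrix.single_add]
  abel

lemma elu_mem (i j : Fin 3) (hij : i ≠ j) (a : L) : elu i j hij a ∈ E3 L :=
  Subgroup.subset_closure ⟨i, j, a, hij, rfl⟩

lemma elu_comm (i j k : Fin 3) (hij : i ≠ j) (hjk : j ≠ k) (hik : i ≠ k) (a b : L) :
    elu i j hij a * elu j k hjk b * (elu i j hij a)⁻¹ * (elu j k hjk b)⁻¹ =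
      elu i k hik (a * b) := by
  rw [elu_inv, elu_inv]
  rw [Units.ext_iff, Units.val_mul, Units.val_mul, Units.val_mul]
  show (1 + Matrix.single i j a) * (1 + Matrix.single j k b) *
      (1 + Matrix.single i j (-a)) * (1 + Matrix.single j k (-b)) =
    1 + Matrix.single i k (a * b)
  have hji : j ≠ i := hij.symm
  have hkj : k ≠ j := hjk.symm
  have hki : k ≠ i := hik.symm
  simp only [add_mul, mul_add, one_mul, mul_one,
    Matrix.single_mul_single_of_ne, hji, hkj, hki, ne_eq, not_false_eq_true,
    Matrix.single_mul_single_same, add_zero, zero_add, mul_zero, zero_mul,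
    mul_neg, neg_mul, neg_neg]
  simp only [stdBM_neg]
  abel

end Aux

/-- If `1 = Σ aᵢ r bᵢ` in `L`, then for every `x ∈ L` the elementary matrix `E₁₂(x)` is a
product of conjugates (by elements of `E₃(L)`) of `E₁₂(r)`, `E₁₃(r)`, `E₂₃(r)` and their
inverses, i.e. it lies in the normal closure of these elements in `E₃(L)`. -/
theorem stmt_14 (L : Type) [Ring L] (r : L)
    (h : ∃ (n : ℕ) (a b : Fin n → L), ∑ i, a i * r * b i = 1)
    (x : L) (U : (Matrix (Fin 3) (Fin 3) L)ˣ)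
    (hU : U.val = 1 + Matrix.single 0 1 x)
    (hUE : U ∈ E3 L) :
    (⟨U, hUE⟩ : E3 L) ∈ Subgroup.normalClosure {u : E3 L |
      u.val.val =
          1 + Matrix.single 0 1 r ∨
      u.val.val =
          1 + Matrix.single 0 2 r ∨
      u.val.val =
          1 + Matrix.single 1 2 r} := by
  obtain ⟨n, a, b, hab⟩ := h
  have h01 : (0 : Fin 3) ≠ 1 := by decide
  have h02 : (0 : Fin 3) ≠ 2 := by decide
  have h12 : (1 : Fin 3) ≠ 2 := by decide
  have h21 : (2 : Fin 3) ≠ 1 := by decide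
  -- elements of the subgroup E3 L
  set N := Subgroup.normalClosure {u : E3 L |
      u.val.val = 1 + Matrix.single 0 1 r ∨
      u.val.val = 1 + Matrix.single 0 2 r ∨
      u.val.val = 1 + Matrix.single 1 2 r} with hN
  let e : ∀ (i j : Fin 3), i ≠ j → L → E3 L :=
    fun i j hij c => ⟨elu i j hij c, elu_mem i j hij c⟩
  have hcomm : ∀ (i j k : Fin 3) (hij : i ≠ j) (hjk : j ≠ k) (hik : i ≠ k) (c d : L),
      e i j hij c * e j k hjk d * (e i j hij c)⁻¹ * (e j k hjk d)⁻¹ =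
        e i k hik (c * d) := by
    intro i j k hij hjk hik c d
    apply Subtype.ext
    exact elu_comm i j k hij hjk hik c d
  have hnorm : ∀ (g : E3 L) {u : E3 L}, u ∈ N → g * u * g⁻¹ ∈ N := by
    intro g u hu
    exact Subgroup.normalClosure_normal.conj_mem u hu g
  -- commutator membership: if h ∈ N then g h g⁻¹ h⁻¹ ∈ N; if g ∈ N then g h g⁻¹ h⁻¹ ∈ N
  have hcm1 : ∀ (g u : E3 L), u ∈ N → g * u * g⁻¹ * u⁻¹ ∈ N := by
    intro g u hu
    exact mul_mem (hnorm g hu) (inv_mem hu)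
  have hcm2 : ∀ (g u : E3 L), g ∈ N → g * u * g⁻¹ * u⁻¹ ∈ N := by
    intro g u hg
    have : g * u * g⁻¹ * u⁻¹ = g * (u * g⁻¹ * u⁻¹) := by group
    rw [this]
    exact mul_mem hg (hnorm u (inv_mem hg))
  -- generators
  have hg23 : e 1 2 h12 r ∈ N := Subgroup.subset_normalClosure (Or.inr (Or.inr rfl))
  -- step A : E₁₃(c·r) ∈ N
  have hA : ∀ c : L, e 0 2 h02 (c * r) ∈ N := by
    intro c
    rw [← hcomm 0 1 2 h01 h12 h02 c r]
    exact hcm1 _ _ hg23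
  -- step B : E₁₂(c·r·d) ∈ N
  have hB : ∀ c d : L, e 0 1 h01 (c * r * d) ∈ N := by
    intro c d
    rw [← hcomm 0 2 1 h02 h21 h01 (c * r) d]
    exact hcm2 _ _ (hA c)
  -- sums
  have hadd : ∀ c d : L, e 0 1 h01 (c + d) = e 0 1 h01 c * e 0 1 h01 d := by
    intro c d
    apply Subtype.ext
    exact (elu_mul 0 1 h01 c d).symm
  have hzero : e 0 1 h01 (0 : L) = 1 := by
    apply Subtype.ext
    apply Units.ext
    show (1 : Matrix (Fin 3) (Fin 3) L) + Matrix.single 0 1 (0 : L) = 1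
    simp
  have hsum : ∀ (m : ℕ) (f : Fin m → L), (∀ i, e 0 1 h01 (f i) ∈ N) →
      e 0 1 h01 (∑ i, f i) ∈ N := by
    intro m
    induction m with
    | zero =>
        intro f _
        rw [show (∑ i : Fin 0, f i) = 0 from rfl, hzero]
        exact one_mem N
    | succ m ih =>
        intro f hf
        rw [Fin.sum_univ_succ, hadd]
        exact mul_mem (hf 0) (ih (fun i => f i.succ) (fun i => hf i.succ))
  have hx : e 0 1 h01 x ∈ N := by
    have : x = ∑ i, (x * a i) * r * b i := by
      calc x = x * ∑ i, a i * r * b i := by rw [hab, mul_one]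
        _ = ∑ i, x * (a i * r * b i) := by rw [Finset.mul_sum]
        _ = ∑ i, (x * a i) * r * b i := by simp [mul_assoc]
    rw [this]
    exact hsum n _ (fun i => hB (x * a i) (b i))
  have hUe : (⟨U, hUE⟩ : E3 L) = e 0 1 h01 x := by
    apply Subtype.ext
    apply Units.ext
    exact hU
  rw [hUe]
  exact hx
end
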